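/- (Intermediate bound in the proof of Lemma 2) Let each f_{n,i} be differentiable, convex, with L-Lipschitz gradient. For any x ∈ ℝ^{Np} and table y, (1/∏_n q_n) Σ_i ‖ĝ(i) − ∇f(x*)‖² ≤ 4 L p(y) − ‖∇f(x) − ∇f(x*)‖² + 4L [f(x) − f(x*) − ⟨∇f(x*), x − x*⟩]. -/

import Mathlib

open Finset
open scoped RealInnerProductSpace

noncomputable section

/-- Block vectors of `ℝ^{Np}`: one vector of `ℝᵖ` per node. -/
abbrev Evec (p : ℕ) := EuclideanSpace ℝ (Fin p)

/-- The local objective of node `n`: `f_n(w) = (1/q_n) ∑_i f_{n,i}(w)`. -/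
def locf {N p : ℕ} {q : Fin N → ℕ}
    (f : (n : Fin N) → Fin (q n) → Evec p → ℝ) (n : Fin N) (w : Evec p) : ℝ :=
  (q n : ℝ)⁻¹ * ∑ i, f n i w

/-- The local stochastic averaging gradient of node `n` for index choice `j`:
`ĝ_n(j) = ∇f_{n,j}(x_n) − ∇f_{n,j}(y_{n,j}) + (1/q_n) ∑_i ∇f_{n,i}(y_{n,i})`. -/
def hatg {N p : ℕ} {q : Fin N → ℕ}
    (f : (n : Fin N) → Fin (q n) → Evec p → ℝ)
    (x : Fin N → Evec p)
    (y : (n : Fin N) → Fin (q n) → Evec p)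
    (n : Fin N) (j : Fin (q n)) : Evec p :=
  gradient (f n j) (x n) - gradient (f n j) (y n j)
    + (q n : ℝ)⁻¹ • ∑ i, gradient (f n i) (y n i)

/-- `p(y) = ∑_n (1/q_n) ∑_i [f_{n,i}(y_{n,i}) − f_{n,i}(x̃*) − ⟨∇f_{n,i}(x̃*), y_{n,i} − x̃*⟩]`. -/
def ptbl {N p : ℕ} {q : Fin N → ℕ}
    (f : (n : Fin N) → Fin (q n) → Evec p → ℝ)
    (xstar : Evec p)
    (y : (n : Fin N) → Fin (q n) → Evec p) : ℝ :=
  ∑ n, (q n : ℝ)⁻¹ * ∑ i,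
    (f n i (y n i) - f n i xstar - ⟪gradient (f n i) xstar, y n i - xstar⟫)

/-- The aggregate optimality gap `f(x) − f(x*) − ⟨∇f(x*), x − x*⟩`, written blockwise. -/
def optgap {N p : ℕ} {q : Fin N → ℕ}
    (f : (n : Fin N) → Fin (q n) → Evec p → ℝ)
    (xstar : Evec p) (x : Fin N → Evec p) : ℝ :=
  ∑ n, (locf f n (x n) - locf f n xstar - ⟪gradient (locf f n) xstar, x n - xstar⟫)

/-- The quadratic form `aᵀ (M ⊗ I_p) a` of an extended weight matrix, written blockwise. -/
def quadForm {N p : ℕ} (M : Matrix (Fin N) (Fin N) ℝ) (a : Fin N → Evec p) : ℝ :=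
  ∑ n, ⟪a n, ∑ m, M n m • a m⟫

/-- The squared Euclidean norm of a block vector of `ℝ^{Np}`. -/
def sqnormB {N p : ℕ} (a : Fin N → Evec p) : ℝ := ∑ n, ‖a n‖^2

/-- The gradient table obtained from `y` by replacing, at each node `n`, the entry
`i n` by the current iterate `x n`. -/
def tblUpd {N p : ℕ} {q : Fin N → ℕ}
    (x : Fin N → Evec p)
    (y : (n : Fin N) → Fin (q n) → Evec p)
    (i : (n : Fin N) → Fin (q n)) : (n : Fin N) → Fin (q n) → Evec p :=
  fun n => Function.update (y n) (i n) (x n)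

end

section AuxDSA

variable {p : ℕ}

private lemma inner_gradient_apply (g : Evec p → ℝ) (w d : Evec p) :
    ⟪gradient g w, d⟫ = fderiv ℝ g w d := by
  rw [gradient]; exact InnerProductSpace.toDual_symm_apply

private lemma hasDerivAt_line (g : Evec p → ℝ) (hg : Differentiable ℝ g) (a d : Evec p) (t : ℝ) :
    HasDerivAt (fun s : ℝ => g (a + s • d)) ⟪gradient g (a + t • d), d⟫ t := by
  have hline : HasDerivAt (fun s : ℝ => a + s • d) d t := by
    simpa using ((hasDerivAt_id t).smul_const d).const_add a
  have h := ((hg (a + t • d)).hasFDerivAt).comp_hasDerivAt t hline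
  rw [inner_gradient_apply]
  exact h

private lemma convex_lower (g : Evec p → ℝ) (hg : Differentiable ℝ g)
    (hc : ConvexOn ℝ Set.univ g) (b w : Evec p) :
    g b + ⟪gradient g b, w - b⟫ ≤ g w := by
  have hφ : ConvexOn ℝ Set.univ (fun t : ℝ => g (b + t • (w - b))) := by
    have h := hc.comp_affineMap (AffineMap.lineMap b w)
    have he : (fun t : ℝ => g (b + t • (w - b))) = g ∘ (AffineMap.lineMap b w) := by
      funext t
      simp [AffineMap.lineMap_apply, vsub_eq_sub, vadd_eq_add]
      congr 1
      abel
    rw [he]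
    simpa using h
  have hder : HasDerivAt (fun t : ℝ => g (b + t • (w - b))) ⟪gradient g b, w - b⟫ 0 := by
    have := hasDerivAt_line g hg b (w - b) 0
    simpa using this
  have hs := hφ.le_slope_of_hasDerivAt (Set.mem_univ (0:ℝ)) (Set.mem_univ (1:ℝ)) one_pos hder
  have h1 : b + (1:ℝ) • (w - b) = w := by simp
  have h0 : b + (0:ℝ) • (w - b) = b := by simp
  rw [slope_def_field] at hs
  rw [h1, h0] at hs
  norm_num at hs
  have he2 : (⟪gradient g b, w - b⟫ : ℝ) = fderiv ℝ g b w - fderiv ℝ g b b := by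
    rw [inner_gradient_apply, map_sub]
  rw [he2]
  linarith

private lemma descent_lemma (L : ℝ) (g : Evec p → ℝ) (hg : Differentiable ℝ g)
    (hlip : ∀ u v : Evec p, ‖gradient g u - gradient g v‖ ≤ L * ‖u - v‖) (a d : Evec p) :
    g (a + d) ≤ g a + ⟪gradient g a, d⟫ + L / 2 * ‖d‖ ^ 2 := by
  set c : ℝ := ⟪gradient g a, d⟫ with hc
  set ψ : ℝ → ℝ := fun t => g (a + t • d) - t * c - L * t ^ 2 / 2 * ‖d‖ ^ 2 with hψ
  have hder : ∀ t : ℝ, HasDerivAt ψ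
      (⟪gradient g (a + t • d), d⟫ - c - L * t * ‖d‖ ^ 2) t := by
    intro t
    have h1 := hasDerivAt_line g hg a d t
    have h2 : HasDerivAt (fun t : ℝ => t * c) c t := by
      simpa using (hasDerivAt_id t).mul_const c
    have h3 : HasDerivAt (fun t : ℝ => L * t ^ 2 / 2 * ‖d‖ ^ 2) (L * t * ‖d‖ ^ 2) t := by
      have hp : HasDerivAt (fun t : ℝ => t ^ 2) (2 * t) t := by
        simpa using hasDerivAt_pow 2 t
      have := ((hp.const_mul L).div_const 2).mul_const (‖d‖ ^ 2)
      rw [show L * t * ‖d‖ ^ 2 = L * (2 * t) / 2 * ‖d‖ ^ 2 by ring]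
      exact this
    simpa [hψ] using (h1.fun_sub h2).fun_sub h3
  have hanti : AntitoneOn ψ (Set.Icc (0:ℝ) 1) := by
    apply antitoneOn_of_deriv_nonpos (convex_Icc 0 1)
    · exact fun t _ => ((hder t).differentiableAt).continuousAt.continuousWithinAt
    · exact fun t _ => ((hder t).differentiableAt).differentiableWithinAt
    · intro t ht
      rw [interior_Icc] at ht
      rw [(hder t).deriv]
      have hcs : ⟪gradient g (a + t • d) - gradient g a, d⟫
          ≤ ‖gradient g (a + t • d) - gradient g a‖ * ‖d‖ := real_inner_le_norm _ _
      have hl : ‖gradient g (a + t • d) - gradient g a‖ ≤ L * (t * ‖d‖) := by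
        have h := hlip (a + t • d) a
        calc ‖gradient g (a + t • d) - gradient g a‖ ≤ L * ‖a + t • d - a‖ := h
          _ = L * (t * ‖d‖) := by
            rw [add_sub_cancel_left, norm_smul, Real.norm_eq_abs, abs_of_nonneg ht.1.le]
      have he : ⟪gradient g (a + t • d), d⟫ - c
          = ⟪gradient g (a + t • d) - gradient g a, d⟫ := by
        rw [inner_sub_left, hc]
      rw [sub_sub, sub_nonpos]
      nlinarith [norm_nonneg d, norm_nonneg (gradient g (a + t • d) - gradient g a)]
  have h01 := hanti (Set.left_mem_Icc.mpr zero_le_one) (Set.right_mem_Icc.mpr zero_le_one)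
    zero_le_one
  simp only [hψ, one_smul, zero_smul, add_zero, one_pow, mul_one, one_mul, zero_pow,
    mul_zero, zero_mul, sub_zero, zero_div] at h01
  nlinarith [h01]

private lemma cocoercive (L : ℝ) (hL : 0 < L) (g : Evec p → ℝ) (hg : Differentiable ℝ g)
    (hc : ConvexOn ℝ Set.univ g)
    (hlip : ∀ u v : Evec p, ‖gradient g u - gradient g v‖ ≤ L * ‖u - v‖) (a b : Evec p) :
    ‖gradient g a - gradient g b‖ ^ 2 ≤ 2 * L * (g a - g b - ⟪gradient g b, a - b⟫) := by
  set G : Evec p := gradient g a - gradient g b with hG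
  set d : Evec p := -(L⁻¹ • G) with hd
  have h1 := convex_lower g hg hc b (a + d)
  have h2 := descent_lemma L g hg hlip a d
  have e1 : ⟪gradient g b, a + d - b⟫ = ⟪gradient g b, a - b⟫ + ⟪gradient g b, d⟫ := by
    rw [show a + d - b = (a - b) + d by abel, inner_add_right]
  have e2 : ⟪gradient g a, d⟫ - ⟪gradient g b, d⟫ = -(L⁻¹ * ‖G‖ ^ 2) := by
    rw [← inner_sub_left, ← hG, hd, inner_neg_right, real_inner_smul_right,
      real_inner_self_eq_norm_sq]
  have e3 : ‖d‖ ^ 2 = L⁻¹ ^ 2 * ‖G‖ ^ 2 := by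
    rw [hd, norm_neg, norm_smul, Real.norm_eq_abs, abs_of_nonneg (inv_nonneg.mpr hL.le), mul_pow]
  have hkey : L / 2 * (L⁻¹ ^ 2 * ‖G‖ ^ 2) - L⁻¹ * ‖G‖ ^ 2 = -(‖G‖ ^ 2 / (2 * L)) := by
    field_simp
    ring
  have h3 : g b + ⟪gradient g b, a - b⟫ + ‖G‖ ^ 2 / (2 * L) ≤ g a := by
    rw [e1] at h1
    rw [e3] at h2
    nlinarith [h1, h2, e2, hkey]
  have h4 : ‖G‖ ^ 2 / (2 * L) ≤ g a - g b - ⟪gradient g b, a - b⟫ := by linarith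
  calc ‖G‖ ^ 2 = 2 * L * (‖G‖ ^ 2 / (2 * L)) := by field_simp
    _ ≤ 2 * L * (g a - g b - ⟪gradient g b, a - b⟫) :=
      mul_le_mul_of_nonneg_left h4 (by positivity)

private lemma sq_norm_sub_le (x y : Evec p) : ‖x - y‖ ^ 2 ≤ 2 * ‖x‖ ^ 2 + 2 * ‖y‖ ^ 2 := by
  have h := norm_sub_le x y
  nlinarith [norm_nonneg x, norm_nonneg y, norm_nonneg (x - y), sq_nonneg (‖x‖ - ‖y‖)]

private lemma variance_sum {k : ℕ} (hk : 0 < k) (v : Fin k → Evec p) :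
    ∑ j, ‖v j - (k : ℝ)⁻¹ • ∑ i, v i‖ ^ 2
      = ∑ j, ‖v j‖ ^ 2 - (k : ℝ) * ‖(k : ℝ)⁻¹ • ∑ i, v i‖ ^ 2 := by
  have hk0 : (k : ℝ) ≠ 0 := Nat.cast_ne_zero.mpr hk.ne'
  set vb : Evec p := (k : ℝ)⁻¹ • ∑ i, v i with hvb
  have hs : ∑ i, v i = (k : ℝ) • vb := by
    rw [hvb, smul_smul, mul_inv_cancel₀ hk0, one_smul]
  calc ∑ j, ‖v j - vb‖ ^ 2 = ∑ j, (‖v j‖ ^ 2 - 2 * ⟪v j, vb⟫ + ‖vb‖ ^ 2) := by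
        refine Finset.sum_congr rfl fun j _ => ?_
        rw [norm_sub_sq_real]
    _ = ∑ j, ‖v j‖ ^ 2 - 2 * ⟪∑ i, v i, vb⟫ + (k : ℝ) * ‖vb‖ ^ 2 := by
        rw [Finset.sum_add_distrib, Finset.sum_sub_distrib, sum_inner, Finset.sum_const,
          Finset.card_univ, Fintype.card_fin, nsmul_eq_mul, ← Finset.mul_sum]
    _ = ∑ j, ‖v j‖ ^ 2 - (k : ℝ) * ‖vb‖ ^ 2 := by
        rw [hs, real_inner_smul_left, real_inner_self_eq_norm_sq]
        ring

private lemma avg_bound {k : ℕ} (hk : 0 < k) (a z : Fin k → Evec p) :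
    ∑ j, ‖a j - z j + (k : ℝ)⁻¹ • ∑ i, z i‖ ^ 2
      ≤ 2 * ∑ j, ‖a j‖ ^ 2 + 2 * ∑ j, ‖z j‖ ^ 2
        - (k : ℝ) * ‖(k : ℝ)⁻¹ • ∑ j, a j‖ ^ 2 := by
  have hk0 : (k : ℝ) ≠ 0 := Nat.cast_ne_zero.mpr hk.ne'
  set ab : Evec p := (k : ℝ)⁻¹ • ∑ i, a i with hab
  set zb : Evec p := (k : ℝ)⁻¹ • ∑ i, z i with hzb
  set u : Fin k → Evec p := fun j => (a j - ab) - (z j - zb) with hu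
  have hsa : ∑ i, a i = (k : ℝ) • ab := by
    rw [hab, smul_smul, mul_inv_cancel₀ hk0, one_smul]
  have hsz : ∑ i, z i = (k : ℝ) • zb := by
    rw [hzb, smul_smul, mul_inv_cancel₀ hk0, one_smul]
  have husum : ∑ j, u j = 0 := by
    simp only [hu]
    rw [Finset.sum_sub_distrib, Finset.sum_sub_distrib, Finset.sum_sub_distrib,
      Finset.sum_const, Finset.card_univ, Fintype.card_fin, hsa, hsz]
    simp [← Nat.cast_smul_eq_nsmul ℝ]
  have hrw : ∀ j, a j - z j + zb = u j + ab := by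
    intro j; simp only [hu]; abel
  have step1 : ∑ j, ‖u j + ab‖ ^ 2 = ∑ j, ‖u j‖ ^ 2 + (k : ℝ) * ‖ab‖ ^ 2 := by
    calc ∑ j, ‖u j + ab‖ ^ 2 = ∑ j, (‖u j‖ ^ 2 + 2 * ⟪u j, ab⟫ + ‖ab‖ ^ 2) := by
          refine Finset.sum_congr rfl fun j _ => ?_
          rw [norm_add_sq_real]
      _ = ∑ j, ‖u j‖ ^ 2 + 2 * ⟪∑ j, u j, ab⟫ + (k : ℝ) * ‖ab‖ ^ 2 := by
          rw [Finset.sum_add_distrib, Finset.sum_add_distrib, sum_inner, Finset.sum_const,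
            Finset.card_univ, Fintype.card_fin, nsmul_eq_mul, ← Finset.mul_sum]
      _ = ∑ j, ‖u j‖ ^ 2 + (k : ℝ) * ‖ab‖ ^ 2 := by
          rw [husum, inner_zero_left]
          ring
  have step2 : ∑ j, ‖u j‖ ^ 2 ≤ 2 * ∑ j, ‖a j - ab‖ ^ 2 + 2 * ∑ j, ‖z j - zb‖ ^ 2 := by
    rw [Finset.mul_sum, Finset.mul_sum, ← Finset.sum_add_distrib]
    refine Finset.sum_le_sum fun j _ => ?_
    exact sq_norm_sub_le (a j - ab) (z j - zb)
  have hva := variance_sum hk a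
  have hvz := variance_sum hk z
  rw [← hab] at hva
  rw [← hzb] at hvz
  have hzb2 : (0:ℝ) ≤ (k : ℝ) * ‖zb‖ ^ 2 := by positivity
  calc ∑ j, ‖a j - z j + zb‖ ^ 2 = ∑ j, ‖u j + ab‖ ^ 2 := by
        refine Finset.sum_congr rfl fun j _ => ?_
        rw [hrw j]
    _ = ∑ j, ‖u j‖ ^ 2 + (k : ℝ) * ‖ab‖ ^ 2 := step1
    _ ≤ 2 * ∑ j, ‖a j - ab‖ ^ 2 + 2 * ∑ j, ‖z j - zb‖ ^ 2 + (k : ℝ) * ‖ab‖ ^ 2 := by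
        linarith [step2]
    _ ≤ 2 * ∑ j, ‖a j‖ ^ 2 + 2 * ∑ j, ‖z j‖ ^ 2 - (k : ℝ) * ‖ab‖ ^ 2 := by
        rw [hva, hvz]
        linarith [hzb2]

private lemma hasGradientAt_locf {N : ℕ} {q : Fin N → ℕ}
    (f : (n : Fin N) → Fin (q n) → Evec p → ℝ)
    (hdiff : ∀ n i, Differentiable ℝ (f n i)) (n : Fin N) (w : Evec p) :
    HasGradientAt (locf f n) ((q n : ℝ)⁻¹ • ∑ i, gradient (f n i) w) w := by
  have hsum : HasFDerivAt (fun w : Evec p => ∑ i, f n i w) (∑ i, fderiv ℝ (f n i) w) w :=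
    HasFDerivAt.fun_sum fun i _ => (hdiff n i w).hasFDerivAt
  have h := hsum.const_mul ((q n : ℝ)⁻¹)
  have hEq : (InnerProductSpace.toDual ℝ (Evec p)) ((q n : ℝ)⁻¹ • ∑ i, gradient (f n i) w)
      = (q n : ℝ)⁻¹ • ∑ i, fderiv ℝ (f n i) w := by
    rw [map_smulₛₗ, map_sum]
    simp only [starRingEnd_apply, star_trivial]
    congr 1
    refine Finset.sum_congr rfl fun i _ => ?_
    rw [gradient]
    exact (InnerProductSpace.toDual ℝ (Evec p)).apply_symm_apply _
  rw [hasGradientAt_iff_hasFDerivAt, hEq]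
  exact h

private lemma pi_avg {N : ℕ} {q : Fin N → ℕ} (hq : ∀ n, 0 < q n) (n : Fin N)
    (T : Fin (q n) → ℝ) :
    (∏ m, (q m : ℝ))⁻¹ * ∑ i : (m : Fin N) → Fin (q m), T (i n)
      = (q n : ℝ)⁻¹ * ∑ j, T j := by
  classical
  set g : (m : Fin N) → Fin (q m) → ℝ :=
    fun m j => if h : m = n then T (Fin.cast (congrArg q h) j) else 1 with hg
  have h1 : ∀ i : (m : Fin N) → Fin (q m), ∏ m, g m (i m) = T (i n) := by
    intro i
    rw [Finset.prod_eq_single n (fun m _ hm => by simp [hg, dif_neg hm]) (by simp)]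
    simp [hg]
  have h2 : ∑ i : (m : Fin N) → Fin (q m), T (i n) = ∏ m, ∑ j, g m j := by
    rw [Finset.prod_univ_sum, Fintype.piFinset_univ]
    exact (Finset.sum_congr rfl fun i _ => h1 i).symm
  have h3 : ∏ m, ∑ j, g m j = (∑ j, T j) * ∏ m ∈ Finset.univ.erase n, (q m : ℝ) := by
    rw [← Finset.mul_prod_erase Finset.univ _ (Finset.mem_univ n)]
    congr 1
    · simp [hg]
    · refine Finset.prod_congr rfl fun m hm => ?_
      have hmn : m ≠ n := (Finset.mem_erase.mp hm).1
      simp [hg, dif_neg hmn]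
  have h4 : ∏ m, (q m : ℝ) = (q n : ℝ) * ∏ m ∈ Finset.univ.erase n, (q m : ℝ) :=
    (Finset.mul_prod_erase Finset.univ _ (Finset.mem_univ n)).symm
  have hP : (0:ℝ) < ∏ m ∈ Finset.univ.erase n, (q m : ℝ) :=
    Finset.prod_pos fun m _ => by exact_mod_cast hq m
  have hqn : (0:ℝ) < (q n : ℝ) := by exact_mod_cast hq n
  rw [h2, h3, h4]
  field_simp

end AuxDSA

/-- **Intermediate bound in the proof of Lemma 2 of the DSA paper.**
With all `f_{n,i}` convex and differentiable with `L`-Lipschitz gradients, for any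
iterate `x` and gradient table `y`, averaging uniformly over joint index choices,
`E_i ‖ĝ(i) − ∇f(x*)‖² ≤ 4L p(y) − ‖∇f(x) − ∇f(x*)‖² + 4L [f(x) − f(x*) − ⟨∇f(x*), x − x*⟩]`. -/
theorem dsa_lemma2_intermediate_bound
    {N p : ℕ} {q : Fin N → ℕ} (hq : ∀ n, 0 < q n)
    (L : ℝ) (hL : 0 < L)
    (f : (n : Fin N) → Fin (q n) → Evec p → ℝ)
    (hdiff : ∀ n i, Differentiable ℝ (f n i))
    (hcvx : ∀ n i, ConvexOn ℝ Set.univ (f n i))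
    (hlip : ∀ n i a b, ‖gradient (f n i) a - gradient (f n i) b‖ ≤ L * ‖a - b‖)
    (xstar : Evec p)
    (hxstar : ∀ w, ∑ n, locf f n xstar ≤ ∑ n, locf f n w)
    (x : Fin N → Evec p)
    (y : (n : Fin N) → Fin (q n) → Evec p) :
    (∏ n, (q n : ℝ))⁻¹ * ∑ i : (n : Fin N) → Fin (q n),
        (∑ n, ‖hatg f x y n (i n) - gradient (locf f n) xstar‖^2)
      ≤ 4 * L * ptbl f xstar y
        - ∑ n, ‖gradient (locf f n) (x n) - gradient (locf f n) xstar‖^2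
        + 4 * L * optgap f xstar x := by
  classical
  set A : (n : Fin N) → Fin (q n) → Evec p :=
    fun n j => gradient (f n j) (x n) - gradient (f n j) xstar with hA
  set Z : (n : Fin N) → Fin (q n) → Evec p :=
    fun n j => gradient (f n j) (y n j) - gradient (f n j) xstar with hZ
  have hgradloc : ∀ n w, gradient (locf f n) w = (q n : ℝ)⁻¹ • ∑ i, gradient (f n i) w :=
    fun n w => (hasGradientAt_locf f hdiff n w).gradient
  have hrw : ∀ n (j : Fin (q n)), hatg f x y n j - gradient (locf f n) xstar
      = A n j - Z n j + (q n : ℝ)⁻¹ • ∑ i, Z n i := by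
    intro n j
    rw [hgradloc]
    simp only [hatg, hA, hZ, Finset.sum_sub_distrib, smul_sub]
    abel
  have hAbar : ∀ n, (q n : ℝ)⁻¹ • ∑ j, A n j
      = gradient (locf f n) (x n) - gradient (locf f n) xstar := by
    intro n
    rw [hgradloc, hgradloc]
    simp only [hA, Finset.sum_sub_distrib, smul_sub]
  have hnode : ∀ n, (q n : ℝ)⁻¹ * ∑ j, ‖hatg f x y n j - gradient (locf f n) xstar‖ ^ 2
      ≤ 4 * L * ((q n : ℝ)⁻¹ * ∑ i, (f n i (y n i) - f n i xstar
            - ⟪gradient (f n i) xstar, y n i - xstar⟫))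
        - ‖gradient (locf f n) (x n) - gradient (locf f n) xstar‖ ^ 2
        + 4 * L * (locf f n (x n) - locf f n xstar
            - ⟪gradient (locf f n) xstar, x n - xstar⟫) := by
    intro n
    have hq0 : (0:ℝ) < (q n : ℝ) := by exact_mod_cast hq n
    have havg := avg_bound (hq n) (A n) (Z n)
    have hLHS : ∑ j, ‖hatg f x y n j - gradient (locf f n) xstar‖ ^ 2
        = ∑ j, ‖A n j - Z n j + (q n : ℝ)⁻¹ • ∑ i, Z n i‖ ^ 2 :=
      Finset.sum_congr rfl fun j _ => by rw [hrw]
    have hSA : ∑ j, ‖A n j‖ ^ 2 ≤ 2 * L * ∑ j, (f n j (x n) - f n j xstar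
        - ⟪gradient (f n j) xstar, x n - xstar⟫) := by
      rw [Finset.mul_sum]
      exact Finset.sum_le_sum fun j _ =>
        cocoercive L hL (f n j) (hdiff n j) (hcvx n j) (hlip n j) (x n) xstar
    have hSZ : ∑ j, ‖Z n j‖ ^ 2 ≤ 2 * L * ∑ j, (f n j (y n j) - f n j xstar
        - ⟪gradient (f n j) xstar, y n j - xstar⟫) := by
      rw [Finset.mul_sum]
      exact Finset.sum_le_sum fun j _ =>
        cocoercive L hL (f n j) (hdiff n j) (hcvx n j) (hlip n j) (y n j) xstar
    have hgapx : (q n : ℝ)⁻¹ * ∑ j, (f n j (x n) - f n j xstar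
          - ⟪gradient (f n j) xstar, x n - xstar⟫)
        = locf f n (x n) - locf f n xstar - ⟪gradient (locf f n) xstar, x n - xstar⟫ := by
      rw [hgradloc, real_inner_smul_left, sum_inner, locf, locf,
        Finset.sum_sub_distrib, Finset.sum_sub_distrib]
      ring
    have h5 : (q n : ℝ)⁻¹ * ∑ j, ‖A n j - Z n j + (q n : ℝ)⁻¹ • ∑ i, Z n i‖ ^ 2
        ≤ (q n : ℝ)⁻¹ * (2 * ∑ j, ‖A n j‖ ^ 2 + 2 * ∑ j, ‖Z n j‖ ^ 2
            - (q n : ℝ) * ‖(q n : ℝ)⁻¹ • ∑ j, A n j‖ ^ 2) :=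
      mul_le_mul_of_nonneg_left havg (by positivity)
    have h6 : (q n : ℝ)⁻¹ * (2 * ∑ j, ‖A n j‖ ^ 2 + 2 * ∑ j, ‖Z n j‖ ^ 2
            - (q n : ℝ) * ‖(q n : ℝ)⁻¹ • ∑ j, A n j‖ ^ 2)
        = 2 * ((q n : ℝ)⁻¹ * ∑ j, ‖A n j‖ ^ 2) + 2 * ((q n : ℝ)⁻¹ * ∑ j, ‖Z n j‖ ^ 2)
          - ‖(q n : ℝ)⁻¹ • ∑ j, A n j‖ ^ 2 := by
      field_simp
    have h7 : (q n : ℝ)⁻¹ * ∑ j, ‖A n j‖ ^ 2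
        ≤ 2 * L * ((q n : ℝ)⁻¹ * ∑ j, (f n j (x n) - f n j xstar
            - ⟪gradient (f n j) xstar, x n - xstar⟫)) := by
      have := mul_le_mul_of_nonneg_left hSA (inv_nonneg.mpr hq0.le)
      calc (q n : ℝ)⁻¹ * ∑ j, ‖A n j‖ ^ 2
          ≤ (q n : ℝ)⁻¹ * (2 * L * ∑ j, (f n j (x n) - f n j xstar
              - ⟪gradient (f n j) xstar, x n - xstar⟫)) := this
        _ = 2 * L * ((q n : ℝ)⁻¹ * ∑ j, (f n j (x n) - f n j xstar
              - ⟪gradient (f n j) xstar, x n - xstar⟫)) := by ring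
    have h8 : (q n : ℝ)⁻¹ * ∑ j, ‖Z n j‖ ^ 2
        ≤ 2 * L * ((q n : ℝ)⁻¹ * ∑ j, (f n j (y n j) - f n j xstar
            - ⟪gradient (f n j) xstar, y n j - xstar⟫)) := by
      have := mul_le_mul_of_nonneg_left hSZ (inv_nonneg.mpr hq0.le)
      calc (q n : ℝ)⁻¹ * ∑ j, ‖Z n j‖ ^ 2
          ≤ (q n : ℝ)⁻¹ * (2 * L * ∑ j, (f n j (y n j) - f n j xstar
              - ⟪gradient (f n j) xstar, y n j - xstar⟫)) := this
        _ = 2 * L * ((q n : ℝ)⁻¹ * ∑ j, (f n j (y n j) - f n j xstar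
              - ⟪gradient (f n j) xstar, y n j - xstar⟫)) := by ring
    rw [hLHS, ← hgapx, ← hAbar n]
    linarith [h5, h6.le, h6.ge, h7, h8]
  have hswap : (∏ n, (q n : ℝ))⁻¹ * ∑ i : (n : Fin N) → Fin (q n),
      (∑ n, ‖hatg f x y n (i n) - gradient (locf f n) xstar‖ ^ 2)
      = ∑ n, (q n : ℝ)⁻¹ * ∑ j, ‖hatg f x y n j - gradient (locf f n) xstar‖ ^ 2 := by
    have : ∑ i : (n : Fin N) → Fin (q n),
        (∑ n, ‖hatg f x y n (i n) - gradient (locf f n) xstar‖ ^ 2)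
        = ∑ n, ∑ i : (m : Fin N) → Fin (q m),
            ‖hatg f x y n (i n) - gradient (locf f n) xstar‖ ^ 2 := Finset.sum_comm
    rw [this, Finset.mul_sum]
    exact Finset.sum_congr rfl fun n _ =>
      pi_avg hq n (fun j => ‖hatg f x y n j - gradient (locf f n) xstar‖ ^ 2)
  rw [hswap]
  have hR : 4 * L * ptbl f xstar y
        - ∑ n, ‖gradient (locf f n) (x n) - gradient (locf f n) xstar‖ ^ 2
        + 4 * L * optgap f xstar x
      = ∑ n, (4 * L * ((q n : ℝ)⁻¹ * ∑ i, (f n i (y n i) - f n i xstar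
            - ⟪gradient (f n i) xstar, y n i - xstar⟫))
          - ‖gradient (locf f n) (x n) - gradient (locf f n) xstar‖ ^ 2
          + 4 * L * (locf f n (x n) - locf f n xstar
            - ⟪gradient (locf f n) xstar, x n - xstar⟫)) := by
    rw [ptbl, optgap, Finset.mul_sum, Finset.mul_sum, ← Finset.sum_sub_distrib,
      ← Finset.sum_add_distrib]
  rw [hR]
  exact Finset.sum_le_sum fun n _ => hnode n
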